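/- For every n ≥ 1 and 0 ≤ q ≤ 1/2, Σ_{i=0}^{⌊nq⌋} C(n, i) ≤ 2^{n·h(q)}, where h(q) = −q·log₂ q − (1−q)·log₂(1−q) is the binary entropy function (with h(0) = 0). -/

import Mathlib

/-- The binary entropy function (base-2 logarithm). -/
noncomputable def binEnt (q : ℝ) : ℝ := -q * Real.logb 2 q - (1 - q) * Real.logb 2 (1 - q)

theorem sum_binomial_le_two_pow_entropy (n : ℕ) (hn : 1 ≤ n) (q : ℝ)
    (hq0 : 0 ≤ q) (hq1 : q ≤ 1 / 2) :
    (∑ i ∈ Finset.Icc 0 ⌊(n : ℝ) * q⌋₊, (n.choose i : ℝ)) ≤ (2 : ℝ) ^ ((n : ℝ) * binEnt q) := by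
  rcases eq_or_lt_of_le hq0 with hq | hqpos
  · -- q = 0
    subst hq
    simp [binEnt]
  -- now 0 < q
  have hq1' : q < 1 := lt_of_le_of_lt hq1 (by norm_num)
  have h1q : 0 < 1 - q := by linarith
  have hnq0 : (0:ℝ) ≤ (n:ℝ) * q := by positivity
  set m := ⌊(n : ℝ) * q⌋₊ with hm
  have hfloor : (m : ℝ) ≤ (n : ℝ) * q := Nat.floor_le hnq0
  have hmn : m ≤ n := by
    have : (n:ℝ) * q ≤ (n:ℝ) := by nlinarith
    calc m ≤ ⌊(n:ℝ)⌋₊ := Nat.floor_le_floor this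
    _ = n := Nat.floor_natCast n
  have hb0 : 0 < q / (1 - q) := div_pos hqpos h1q
  have hb1 : q / (1 - q) ≤ 1 := by
    rw [div_le_one h1q]; linarith
  have hf : ∀ a : ℝ, (1 - q) ^ (n:ℝ) * (q / (1 - q)) ^ a
      = q ^ a * (1 - q) ^ ((n:ℝ) - a) := by
    intro a
    rw [Real.div_rpow hq0 h1q.le, Real.rpow_sub h1q]
    ring
  have hE : (2:ℝ) ^ (-((n:ℝ) * binEnt q)) = q ^ ((n:ℝ)*q) * (1-q) ^ ((n:ℝ) - (n:ℝ)*q) := by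
    have h1 : -((n:ℝ) * binEnt q)
        = Real.logb 2 q * ((n:ℝ)*q) + Real.logb 2 (1-q) * ((n:ℝ)*(1-q)) := by
      unfold binEnt; ring
    have h2 : (n:ℝ) - (n:ℝ)*q = (n:ℝ)*(1-q) := by ring
    rw [h1, h2, Real.rpow_add (by norm_num : (0:ℝ) < 2),
      Real.rpow_mul (by norm_num : (0:ℝ) ≤ 2), Real.rpow_mul (by norm_num : (0:ℝ) ≤ 2),
      Real.rpow_logb (by norm_num) (by norm_num) hqpos,
      Real.rpow_logb (by norm_num) (by norm_num) h1q]
  set E : ℝ := (2:ℝ) ^ (-((n:ℝ) * binEnt q)) with hEdef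
  have hEpos : 0 < E := Real.rpow_pos_of_pos (by norm_num) _
  have key : ∀ i ∈ Finset.Icc 0 m, E ≤ q ^ i * (1 - q) ^ (n - i) := by
    intro i hi
    have him : i ≤ m := (Finset.mem_Icc.1 hi).2
    have hinq : (i:ℝ) ≤ (n:ℝ) * q := le_trans (by exact_mod_cast him) hfloor
    have hin : i ≤ n := le_trans him hmn
    have mono : (q / (1-q)) ^ ((n:ℝ)*q) ≤ (q / (1-q)) ^ ((i:ℝ)) :=
      Real.rpow_le_rpow_of_exponent_ge hb0 hb1 hinq
    have step : E ≤ q ^ ((i:ℝ)) * (1-q) ^ ((n:ℝ) - (i:ℝ)) := by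
      show E ≤ _
      rw [hE, ← hf, ← hf]
      exact mul_le_mul_of_nonneg_left mono (Real.rpow_pos_of_pos h1q _).le
    have e1 : q ^ ((i:ℝ)) = q ^ i := Real.rpow_natCast q i
    have e2 : (1-q) ^ ((n:ℝ) - (i:ℝ)) = (1-q) ^ (n - i) := by
      rw [show (n:ℝ) - (i:ℝ) = ((n - i : ℕ) : ℝ) by
        rw [Nat.cast_sub hin], Real.rpow_natCast]
    rwa [e1, e2] at step
  have sum1 : ∑ i ∈ Finset.Icc 0 m, (n.choose i : ℝ) * (q ^ i * (1 - q) ^ (n - i)) ≤ 1 := by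
    have hsub : Finset.Icc 0 m ⊆ Finset.range (n+1) := by
      intro i hi
      exact Finset.mem_range.2 (Nat.lt_succ_of_le (le_trans (Finset.mem_Icc.1 hi).2 hmn))
    have hbin : ∑ i ∈ Finset.range (n+1), (n.choose i : ℝ) * (q ^ i * (1 - q) ^ (n - i)) = 1 := by
      have h2 : ∑ i ∈ Finset.range (n+1), q ^ i * (1-q) ^ (n-i) * (n.choose i : ℝ) = 1 := by
        rw [← add_pow]; norm_num
      exact (Finset.sum_congr rfl fun i _ => by ring).trans h2
    calc ∑ i ∈ Finset.Icc 0 m, (n.choose i : ℝ) * (q ^ i * (1 - q) ^ (n - i))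
        ≤ ∑ i ∈ Finset.range (n+1), (n.choose i : ℝ) * (q ^ i * (1 - q) ^ (n - i)) := by
          apply Finset.sum_le_sum_of_subset_of_nonneg hsub
          intro i _ _
          positivity
      _ = 1 := hbin
  have main : (∑ i ∈ Finset.Icc 0 m, (n.choose i : ℝ)) * E ≤ 1 := by
    rw [Finset.sum_mul]
    refine le_trans (Finset.sum_le_sum ?_) sum1
    intro i hi
    exact mul_le_mul_of_nonneg_left (key i hi) (Nat.cast_nonneg _)
  have hEinv : E⁻¹ = (2:ℝ) ^ ((n:ℝ) * binEnt q) := by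
    rw [hEdef, Real.rpow_neg (by norm_num), inv_inv]
  calc (∑ i ∈ Finset.Icc 0 m, (n.choose i : ℝ))
      ≤ E⁻¹ := by
        rw [← mul_le_mul_iff_of_pos_right hEpos, inv_mul_cancel₀ hEpos.ne']
        exact main
    _ = _ := hEinv
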